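/- arXiv:1810.10632 — 11 statements merged into one kernel-verified Lean document; each statement's English description precedes it below -/
import Mathlib

section
/- For any round, i.e., any range of steps s0 ≤ i < s1, and any processor p, assuming (Partition), (Interval) and (NoDoubleMigration), the attached set at the end of the round is disjoint from the round-level set of nodes migrated from p: R s1 p ∩ (⋃_{s0 ≤ i < s1} M⁺ i p) = ∅. -/
open Set

variable {P V : Type*}

/-- `Rtot R i` is the set of ready nodes at step `i`. -/
def Rtot (R : ℕ → P → Set V) (i : ℕ) : Set V := ⋃ p, R i p

/-- Nodes enabled by `p` at step `i`. -/
def En (R : ℕ → P → Set V) (i : ℕ) (p : P) : Set V := R (i + 1) p \ Rtot R i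

/-- Nodes executed (computed) by `p` at step `i`. -/
def Ex (R : ℕ → P → Set V) (i : ℕ) (p : P) : Set V := R i p \ Rtot R (i + 1)

/-- Nodes migrated from `p` at step `i`. -/
def Mout (R : ℕ → P → Set V) (i : ℕ) (p : P) : Set V :=
  R i p ∩ (Rtot R (i + 1) \ R (i + 1) p)

/-- Nodes migrated to `p` at step `i`. -/
def Mi (R : ℕ → P → Set V) (i : ℕ) (p : P) : Set V :=
  R (i + 1) p ∩ (Rtot R i \ R i p)

theorem end_of_round_disjoint_from_migrated_out (R : ℕ → P → Set V) (s0 s1 : ℕ)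
    (hPart : ∀ i : ℕ, ∀ p q : P, p ≠ q → Disjoint (R i p) (R i q))
    (hInterval : ∀ (μ : V) (i j k : ℕ), i ≤ j → j ≤ k →
      μ ∈ Rtot R i → μ ∈ Rtot R k → μ ∈ Rtot R j)
    (hNoDouble : ∀ i ∈ Set.Ico s0 s1, ∀ j ∈ Set.Ico s0 s1, ∀ (q r : P) (μ : V),
      μ ∈ Mout R i q → μ ∈ Mout R j r → i = j ∧ q = r)
    (p : P) :
    R s1 p ∩ (⋃ i ∈ Set.Ico s0 s1, Mout R i p) = ∅ := by
  ext μ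
  simp only [Set.mem_inter_iff, Set.mem_iUnion, Set.mem_empty_iff_false, iff_false, not_and]
  rintro hμs1 ⟨i, hi, hout⟩
  obtain ⟨hRi, hRtot, hnotRp⟩ := hout
  -- find minimal m with i < m ≤ s1 and μ ∈ R m p
  have hQ : ∃ m, i < m ∧ μ ∈ R m p := ⟨s1, hi.2, hμs1⟩
  classical
  set m := Nat.find hQ with hm
  obtain ⟨him, hmem⟩ := Nat.find_spec hQ
  rw [← hm] at him hmem
  have hmle : m ≤ s1 := Nat.find_le ⟨hi.2, hμs1⟩
  have hne : m ≠ i + 1 := by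
    intro h; rw [h] at hmem; exact hnotRp hmem
  have hgt : i + 1 < m := lt_of_le_of_ne him (Ne.symm hne)
  set j := m - 1 with hj
  have hj1 : j + 1 = m := Nat.succ_pred_eq_of_pos (Nat.lt_of_le_of_lt (Nat.zero_le _) hgt)
  have hij : i < j := by omega
  have hnotRj : μ ∉ R j p := by
    intro h
    exact Nat.find_min hQ (show j < m by omega) ⟨hij, h⟩
  have hjlt : j < s1 := by omega
  -- μ ∈ Rtot R j
  have hRtotj : μ ∈ Rtot R j := by
    apply hInterval μ (i + 1) j s1 (by omega) (by omega) hRtot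
    exact Set.mem_iUnion.2 ⟨p, hμs1⟩
  obtain ⟨q, hq⟩ := Set.mem_iUnion.1 hRtotj
  have hqp : q ≠ p := fun h => hnotRj (h ▸ hq)
  have houtq : μ ∈ Mout R j q := by
    refine ⟨hq, ?_, ?_⟩
    · rw [hj1]; exact Set.mem_iUnion.2 ⟨p, hmem⟩
    · intro h
      rw [hj1] at h
      exact (hPart m q p hqp).ne_of_mem h hmem rfl
  have := hNoDouble i hi j ⟨le_trans hi.1 (le_of_lt hij), hjlt⟩ p q μ ⟨hRi, hRtot, hnotRp⟩ houtq
  omega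
end

section
/- For any steps s0 < s1 and any processor p, with no further hypotheses, R s1 p ⊇ (⋃_{s0 ≤ i < s1} M⁻ i p) \ (⋃_{s0 ≤ i < s1} (C i p ∪ M⁺ i p)). -/
open Set

variable {P V : Type*}

theorem migrated_in_minus_executed_migrated_out_subset (R : ℕ → P → Set V)
    (s0 s1 : ℕ) (h : s0 < s1) (p : P) :
    (⋃ i ∈ Set.Ico s0 s1, Mi R i p) \ (⋃ i ∈ Set.Ico s0 s1, (Ex R i p ∪ Mout R i p)) ⊆
      R s1 p := by
  rintro v ⟨hin, hout⟩
  simp only [mem_iUnion, exists_prop] at hin hout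
  push_neg at hout
  obtain ⟨i, hi, hMi⟩ := hin
  have step : ∀ j, j ∈ Set.Ico s0 s1 → v ∈ R (j + 1) p → v ∈ R s1 p := by
    rintro j ⟨hj1, hj2⟩ hv
    have : ∀ k, j + 1 + k ≤ s1 → v ∈ R (j + 1 + k) p := by
      intro k
      induction k with
      | zero => intro _; exact hv
      | succ k ih =>
        intro hk
        have hle : j + 1 + k ≤ s1 := by omega
        have hvk := ih hle
        have hjk : j + 1 + k ∈ Set.Ico s0 s1 := ⟨by omega, by omega⟩
        have hnot := hout _ hjk
        have hRtot : v ∈ Rtot R (j + 1 + k + 1) := by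
          by_contra hc
          exact hnot (Or.inl ⟨hvk, hc⟩)
        by_contra hc
        exact hnot (Or.inr ⟨hvk, hRtot, by simpa [Nat.add_assoc] using hc⟩)
    have := this (s1 - (j + 1)) (by omega)
    simpa [Nat.add_sub_cancel' (by omega : j + 1 ≤ s1)] using this
  exact step i hi hMi.1
end

section
/- For any steps s0 < s1 and any processor p, with no further hypotheses, R s1 p ∪ (⋃_{s0 ≤ i < s1} C i p) ⊇ ⋂_{s0 ≤ i < s1} [ R s0 p ∩ ((R i p)ᶜ ∪ (Rtot (i+1))ᶜ ∪ R (i+1) p) ], where complements are taken in the node type V. -/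
open Set

variable {P V : Type*}

theorem inter_bound_by_end_and_executed (R : ℕ → P → Set V)
    (s0 s1 : ℕ) (h : s0 < s1) (p : P) :
    (⋂ i ∈ Set.Ico s0 s1, (R s0 p ∩ ((R i p)ᶜ ∪ (Rtot R (i + 1))ᶜ ∪ R (i + 1) p))) ⊆
      R s1 p ∪ ⋃ i ∈ Set.Ico s0 s1, Ex R i p := by
  intro x hx
  simp only [Set.mem_iInter, Set.mem_inter_iff, Set.mem_union, Set.mem_compl_iff,
    Set.mem_Ico] at hx
  have key : ∀ k, s0 ≤ k → k ≤ s1 →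
      x ∈ R k p ∨ ∃ j, s0 ≤ j ∧ j < s1 ∧ x ∈ Ex R j p := by
    intro k hk
    induction k, hk using Nat.le_induction with
    | base => intro _; exact Or.inl (hx s0 ⟨le_rfl, h⟩).1
    | succ n hn ih =>
      intro hn1
      have hlt : n < s1 := by omega
      rcases ih (le_of_lt hlt) with hr | hex
      · rcases (hx n ⟨hn, hlt⟩).2 with (hc | hc) | hc
        · exact absurd hr hc
        · exact Or.inr ⟨n, hn, hlt, hr, hc⟩
        · exact Or.inl hc
      · exact Or.inr hex
  rcases key s1 (le_of_lt h) le_rfl with hr | ⟨j, hj0, hj1, hj⟩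
  · exact Or.inl hr
  · exact Or.inr (Set.mem_biUnion (show j ∈ Set.Ico s0 s1 from ⟨hj0, hj1⟩) hj)
end

section
/- For any steps s0 < s1 and any processor p, with no further hypotheses, R s1 p ∪ (⋃_{s0 ≤ i < s1} C i p) ⊇ (⋃_{s0 ≤ i < s1} E i p) \ (⋃_{s0 ≤ i < s1} M⁺ i p). -/
open Set

variable {P V : Type*}

theorem enabled_minus_migrated_out_subset (R : ℕ → P → Set V)
    (s0 s1 : ℕ) (h : s0 < s1) (p : P) :
    (⋃ i ∈ Set.Ico s0 s1, En R i p) \ (⋃ i ∈ Set.Ico s0 s1, Mout R i p) ⊆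
      R s1 p ∪ ⋃ i ∈ Set.Ico s0 s1, Ex R i p := by
  intro v hv
  obtain ⟨hin, hnm⟩ := hv
  simp only [mem_iUnion, exists_prop] at hin hnm
  push_neg at hnm
  obtain ⟨i, hi, hvi⟩ := hin
  -- v ∈ R (i+1) p; chase forward
  have key : ∀ n k, k + n = s1 → s0 ≤ k → v ∈ R k p →
      v ∈ R s1 p ∪ ⋃ j ∈ Set.Ico s0 s1, Ex R j p := by
    intro n
    induction n with
    | zero =>
      intro k hk _ hvk
      have : k = s1 := by omega
      subst this; exact Or.inl hvk
    | succ m ih =>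
      intro k hk hs0k hvk
      by_cases hnext : v ∈ R (k + 1) p
      · exact ih (k + 1) (by omega) (by omega) hnext
      · by_cases hrt : v ∈ Rtot R (k + 1)
        · exact absurd ⟨hvk, hrt, hnext⟩ (hnm k ⟨hs0k, by omega⟩)
        · right
          simp only [mem_iUnion, exists_prop]
          exact ⟨k, ⟨hs0k, by omega⟩, hvk, hrt⟩
  obtain ⟨hi1, hi2⟩ := hi
  exact key (s1 - (i + 1)) (i + 1) (by omega) (by omega) hvi.1
end

section
/- For any round, i.e., any range of steps s0 ≤ i < s1, and any processor p, assuming (Partition), (Interval) and (NoDoubleMigration), the initial attached set and the round-level enabled set are disjoint from the round-level set of nodes migrated to p: ( R s0 p ∪ ⋃_{s0 ≤ i < s1} E i p ) ∩ ( ⋃_{s0 ≤ i < s1} M⁻ i p ) = ∅. -/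
open Set

variable {P V : Type*}

theorem initial_and_enabled_disjoint_from_migrated_in (R : ℕ → P → Set V) (s0 s1 : ℕ)
    (hPart : ∀ i : ℕ, ∀ p q : P, p ≠ q → Disjoint (R i p) (R i q))
    (hInterval : ∀ (μ : V) (i j k : ℕ), i ≤ j → j ≤ k →
      μ ∈ Rtot R i → μ ∈ Rtot R k → μ ∈ Rtot R j)
    (hNoDouble : ∀ i ∈ Set.Ico s0 s1, ∀ j ∈ Set.Ico s0 s1, ∀ (q r : P) (μ : V),
      μ ∈ Mout R i q → μ ∈ Mout R j r → i = j ∧ q = r)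
    (p : P) :
    (R s0 p ∪ ⋃ i ∈ Set.Ico s0 s1, En R i p) ∩ (⋃ i ∈ Set.Ico s0 s1, Mi R i p) = ∅ := by
  ext μ
  simp only [Set.mem_inter_iff, Set.mem_union, Set.mem_iUnion, Set.mem_empty_iff_false,
    iff_false, not_and, Set.mem_Ico]
  rintro hL ⟨j, ⟨hj0, hj1⟩, hjMi⟩
  obtain ⟨hjp1, hjRtot, hjnot⟩ := hjMi
  -- μ comes from some q ≠ p at step j
  obtain ⟨q, hq⟩ := Set.mem_iUnion.mp hjRtot
  have hqp : q ≠ p := fun h => hjnot (h ▸ hq)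
  have hMoutq : μ ∈ Mout R j q := by
    refine ⟨hq, Set.mem_iUnion.mpr ⟨p, hjp1⟩, ?_⟩
    exact fun h => (hPart (j + 1) q p hqp).le_bot ⟨h, hjp1⟩
  -- helper: find an exit step
  have exit_step : ∀ a b : ℕ, a ≤ b → μ ∈ R a p → μ ∉ R b p →
      ∃ k, a ≤ k ∧ k < b ∧ μ ∈ R k p ∧ μ ∉ R (k + 1) p := by
    intro a b
    induction b with
    | zero => intro hab ha hb; interval_cases a; exact absurd ha hb
    | succ b ih =>
      intro hab ha hb
      rcases Nat.lt_or_ge a (b + 1) with hab' | hab'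
      · by_cases h : μ ∈ R b p
        · exact ⟨b, by omega, by omega, h, hb⟩
        · obtain ⟨k, h1, h2, h3, h4⟩ := ih (by omega) ha h
          exact ⟨k, h1, by omega, h3, h4⟩
      · have : a = b + 1 := by omega
        exact absurd (this ▸ ha) hb
  rcases hL with hs0 | ⟨i, ⟨hi0, hi1⟩, hiEn⟩
  · -- μ ∈ R s0 p
    obtain ⟨k, hk0, hkj, hkp, hkp1⟩ := exit_step s0 j hj0 hs0 hjnot
    have hkRtot : μ ∈ Rtot R (k + 1) :=
      hInterval μ s0 (k + 1) j (by omega) (by omega) (Set.mem_iUnion.mpr ⟨p, hs0⟩) hjRtot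
    have hMoutp : μ ∈ Mout R k p := ⟨hkp, hkRtot, hkp1⟩
    obtain ⟨hkj', _⟩ := hNoDouble k ⟨hk0, by omega⟩ j ⟨hj0, hj1⟩ p q μ hMoutp hMoutq
    omega
  · -- μ ∈ En R i p, i ∈ [s0, s1)
    obtain ⟨hip1, hiRtot⟩ := hiEn
    rcases Nat.lt_or_ge i j with hij | hij
    · -- i < j : exit step in [i+1, j)
      obtain ⟨k, hk0, hkj, hkp, hkp1⟩ := exit_step (i + 1) j (by omega) hip1 hjnot
      have hkRtot : μ ∈ Rtot R (k + 1) :=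
        hInterval μ (i + 1) (k + 1) j (by omega) (by omega)
          (Set.mem_iUnion.mpr ⟨p, hip1⟩) hjRtot
      have hMoutp : μ ∈ Mout R k p := ⟨hkp, hkRtot, hkp1⟩
      obtain ⟨hkj', _⟩ := hNoDouble k ⟨by omega, by omega⟩ j ⟨hj0, hj1⟩ p q μ hMoutp hMoutq
      omega
    · -- j ≤ i : μ ready at j and at i+1, hence at i, contradicting En
      exact hiRtot (hInterval μ j i (i + 1) hij (Nat.le_succ i) hjRtot
        (Set.mem_iUnion.mpr ⟨p, hip1⟩))
end

section
/- For any round, i.e., any range of steps s0 ≤ i < s1, and any processor p, assuming (Partition), (Interval) and (NoDoubleMigration), the round-level executed set is disjoint from the round-level set of nodes migrated from p: (⋃_{s0 ≤ i < s1} C i p) ∩ (⋃_{s0 ≤ i < s1} M⁺ i p) = ∅. -/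
open Set

variable {P V : Type*}

lemma mem_Rtot_of_mem {R : ℕ → P → Set V} {i : ℕ} {q : P} {μ : V}
    (h : μ ∈ R i q) : μ ∈ Rtot R i := Set.mem_iUnion.2 ⟨q, h⟩

lemma exists_mout_aux (R : ℕ → P → Set V)
    (hPart : ∀ i : ℕ, ∀ p q : P, p ≠ q → Disjoint (R i p) (R i q))
    (hInterval : ∀ (μ : V) (i j k : ℕ), i ≤ j → j ≤ k →
      μ ∈ Rtot R i → μ ∈ Rtot R k → μ ∈ Rtot R j)
    (μ : V) (p : P) (b : ℕ) (hb : μ ∈ R b p) :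
    ∀ n a q, b - a = n → a ≤ b → q ≠ p → μ ∈ R a q →
      ∃ k r, a ≤ k ∧ k < b ∧ μ ∈ Mout R k r := by
  intro n
  induction n with
  | zero =>
    intro a q hn hab hqp ha
    have : a = b := le_antisymm hab (by omega)
    subst this
    exact ((Set.disjoint_left.1 (hPart a q p hqp)) ha hb).elim
  | succ n ih =>
    intro a q hn hab hqp ha
    have halt : a < b := by omega
    have htot : μ ∈ Rtot R (a + 1) :=
      hInterval μ a (a + 1) b (by omega) (by omega) (mem_Rtot_of_mem ha) (mem_Rtot_of_mem hb)
    by_cases hnext : μ ∈ R (a + 1) q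
    · by_cases heq : a + 1 = b
      · subst heq
        exact ((Set.disjoint_left.1 (hPart (a+1) q p hqp)) hnext hb).elim
      · obtain ⟨k, r, hk1, hk2, hk3⟩ := ih (a + 1) q (by omega) (by omega) hqp hnext
        exact ⟨k, r, by omega, hk2, hk3⟩
    · exact ⟨a, q, le_refl a, halt, ⟨ha, htot, hnext⟩⟩

theorem executed_disjoint_from_migrated_out (R : ℕ → P → Set V) (s0 s1 : ℕ)
    (hPart : ∀ i : ℕ, ∀ p q : P, p ≠ q → Disjoint (R i p) (R i q))
    (hInterval : ∀ (μ : V) (i j k : ℕ), i ≤ j → j ≤ k →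
      μ ∈ Rtot R i → μ ∈ Rtot R k → μ ∈ Rtot R j)
    (hNoDouble : ∀ i ∈ Set.Ico s0 s1, ∀ j ∈ Set.Ico s0 s1, ∀ (q r : P) (μ : V),
      μ ∈ Mout R i q → μ ∈ Mout R j r → i = j ∧ q = r)
    (p : P) :
    (⋃ i ∈ Set.Ico s0 s1, Ex R i p) ∩ (⋃ i ∈ Set.Ico s0 s1, Mout R i p) = ∅ := by
  ext μ
  simp only [Set.mem_inter_iff, Set.mem_iUnion, Set.mem_empty_iff_false, iff_false, not_and]
  rintro ⟨i, hi, hEx⟩ ⟨j, hj, hMout⟩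
  obtain ⟨hRi, hnoti⟩ := hEx
  obtain ⟨hRj, hjtot, hnotj⟩ := hMout
  rcases le_or_gt i j with hij | hij
  · exact hnoti (hInterval μ i (i + 1) (j + 1) (by omega) (by omega)
      (mem_Rtot_of_mem hRi) hjtot)
  · -- j < i, so j + 1 ≤ i
    obtain ⟨hj1, hj2⟩ := hj
    obtain ⟨hi1, hi2⟩ := hi
    obtain ⟨q, hq⟩ := Set.mem_iUnion.1 hjtot
    have hqp : q ≠ p := fun h => hnotj (h ▸ hq)
    obtain ⟨k, r, hk1, hk2, hk3⟩ := exists_mout_aux R hPart hInterval μ p i hRi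
      (i - (j + 1)) (j + 1) q rfl (by omega) hqp hq
    have := hNoDouble j ⟨hj1, hj2⟩ k ⟨by omega, by omega⟩ p r μ ⟨hRj, hjtot, hnotj⟩ hk3
    omega
end

section
/- For any round, i.e., any range of steps s0 ≤ i < s1, and any processor p, with no further hypotheses, R s0 p ∪ (⋃_{s0 ≤ i < s1} E i p) ∪ (⋃_{s0 ≤ i < s1} M⁻ i p) ⊇ (⋃_{s0 ≤ i < s1} C i p) ∪ (⋃_{s0 ≤ i < s1} M⁺ i p). -/
open Set

variable {P V : Type*}

theorem executed_and_migrated_out_subset (R : ℕ → P → Set V) (s0 s1 : ℕ) (p : P) :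
    (⋃ i ∈ Set.Ico s0 s1, Ex R i p) ∪ (⋃ i ∈ Set.Ico s0 s1, Mout R i p) ⊆
      R s0 p ∪ (⋃ i ∈ Set.Ico s0 s1, En R i p) ∪ (⋃ i ∈ Set.Ico s0 s1, Mi R i p) := by
  intro x hx
  have key : ∀ i, s0 ≤ i → i < s1 → x ∈ R i p →
      x ∈ R s0 p ∪ (⋃ i ∈ Set.Ico s0 s1, En R i p) ∪ (⋃ i ∈ Set.Ico s0 s1, Mi R i p) := by
    intro i
    induction i with
    | zero => intro h0 _ hxp; exact Or.inl (Or.inl (Nat.le_zero.mp h0 ▸ hxp))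
    | succ j ih =>
      intro h0 h1 hxp
      rcases Nat.eq_or_lt_of_le h0 with heq | hlt
      · exact Or.inl (Or.inl (heq ▸ hxp))
      · have hj0 : s0 ≤ j := Nat.lt_succ_iff.mp hlt
        have hj1 : j < s1 := Nat.lt_of_succ_lt h1
        by_cases hR : x ∈ Rtot R j
        · by_cases hRj : x ∈ R j p
          · exact ih hj0 hj1 hRj
          · exact Or.inr (mem_biUnion ⟨hj0, hj1⟩ ⟨hxp, hR, hRj⟩)
        · exact Or.inl (Or.inr (mem_biUnion ⟨hj0, hj1⟩ ⟨hxp, hR⟩))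
  rcases hx with hx | hx <;>
  · simp only [mem_iUnion, Set.mem_Ico] at hx
    obtain ⟨i, ⟨hi0, hi1⟩, hxi⟩ := hx
    exact key i hi0 hi1 hxi.1
end

section
/- (Connecting Lemma, combinatorial form) Let V be a type and R, E, M⁻, C, M⁺, R', C' finite subsets of V satisfying: E ∩ R = ∅; (R ∪ E) ∩ M⁻ = ∅; C ∩ M⁺ = ∅; C ∪ M⁺ ⊆ R ∪ E ∪ M⁻; C ⊆ R; R' = (E ∪ R ∪ M⁻) \ (C ∪ M⁺); and C' ⊆ R'. Then |E| < |C'| + |M⁺| if and only if |R' \ C'| < |R \ C| + |M⁻|, where |·| denotes cardinality. -/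
/-- Connecting Lemma (combinatorial form). -/
theorem connecting_lemma {V : Type*} [DecidableEq V]
    (R E Mminus C Mplus R' C' : Finset V)
    (h1 : E ∩ R = ∅)
    (h2 : (R ∪ E) ∩ Mminus = ∅)
    (h3 : C ∩ Mplus = ∅)
    (h4 : C ∪ Mplus ⊆ R ∪ E ∪ Mminus)
    (h5 : C ⊆ R)
    (h6 : R' = (E ∪ R ∪ Mminus) \ (C ∪ Mplus))
    (h7 : C' ⊆ R') :
    E.card < C'.card + Mplus.card ↔ (R' \ C').card < (R \ C).card + Mminus.card := by
  have hset : (E ∪ R ∪ Mminus) = (R ∪ E ∪ Mminus) := by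
    rw [Finset.union_comm E R]
  have hER : Disjoint E R := Finset.disjoint_iff_inter_eq_empty.mpr h1
  have hREM : Disjoint (R ∪ E) Mminus := Finset.disjoint_iff_inter_eq_empty.mpr h2
  have hCM : Disjoint C Mplus := Finset.disjoint_iff_inter_eq_empty.mpr h3
  have hu : (R ∪ E ∪ Mminus).card = R.card + E.card + Mminus.card := by
    rw [Finset.card_union_of_disjoint hREM, Finset.card_union_of_disjoint hER.symm]
  have hcm : (C ∪ Mplus).card = C.card + Mplus.card :=
    Finset.card_union_of_disjoint hCM
  have hR' : R'.card = R.card + E.card + Mminus.card - (C.card + Mplus.card) := by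
    rw [h6, hset, Finset.card_sdiff_of_subset h4, hu, hcm]
  have hle : C.card + Mplus.card ≤ R.card + E.card + Mminus.card := by
    rw [← hcm, ← hu]; exact Finset.card_le_card h4
  have hC' : (R' \ C').card = R'.card - C'.card := Finset.card_sdiff_of_subset h7
  have hC'le : C'.card ≤ R'.card := Finset.card_le_card h7
  have hRC : (R \ C).card = R.card - C.card := Finset.card_sdiff_of_subset h5
  have hCle : C.card ≤ R.card := Finset.card_le_card h5
  omega
end

section
/- Let (Ω, μ) be a probability space, N a natural number, c a nonnegative real, M : Ω → ℕ a random variable with M ω ≤ N for all ω, and Y₁, …, Y_N : Ω → {0, 1} indicator random variables such that each Yᵢ is independent of M and satisfies E[Yᵢ] ≥ c. Then E[ ∑_{i=1}^{N − M} Yᵢ ] ≥ c · (N − E[M]). -/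
open MeasureTheory ProbabilityTheory

theorem expected_sum_lower_bound {Ω : Type*} [MeasurableSpace Ω] (μ : Measure Ω)
    [IsProbabilityMeasure μ]
    (N : ℕ) (c : ℝ) (hc : 0 ≤ c)
    (M : Ω → ℕ) (hM : Measurable M) (hMN : ∀ ω, M ω ≤ N)
    (Y : ℕ → Ω → ℝ)
    (hYmeas : ∀ i < N, Measurable (Y i))
    (hY01 : ∀ i < N, ∀ ω, Y i ω = 0 ∨ Y i ω = 1)
    (hindep : ∀ i < N, IndepFun (Y i) M μ)
    (hEY : ∀ i < N, c ≤ ∫ ω, Y i ω ∂μ) :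
    c * ((N : ℝ) - ∫ ω, (M ω : ℝ) ∂μ) ≤
      ∫ ω, (∑ i ∈ Finset.range (N - M ω), Y i ω) ∂μ := by
  classical
  set A : ℕ → Set Ω := fun i => {ω | i + M ω < N} with hA
  have hAmeas : ∀ i, MeasurableSet (A i) := by
    intro i
    have : A i = M ⁻¹' {m | i + m < N} := rfl
    rw [this]
    exact hM MeasurableSet.of_discrete
  -- indicator of A i as a function of M
  have hφ : ∀ i, (A i).indicator (fun _ => (1:ℝ)) =
      (fun m => if i + m < N then (1:ℝ) else 0) ∘ M := by
    intro i
    funext ω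
    simp only [Set.indicator_apply, Function.comp_apply]
    rfl
  -- integrability of the Y i
  have hYint : ∀ i < N, Integrable (Y i) μ := by
    intro i hi
    refine Integrable.mono' (integrable_const 1) ((hYmeas i hi).aestronglyMeasurable) ?_
    filter_upwards with ω
    rcases hY01 i hi ω with h | h <;> simp [h]
  -- pointwise rewrite of the integrand
  have hpt : ∀ ω, (∑ i ∈ Finset.range (N - M ω), Y i ω)
      = ∑ i ∈ Finset.range N, (A i).indicator (Y i) ω := by
    intro ω
    have hfilter : Finset.range (N - M ω)
        = (Finset.range N).filter (fun i => i + M ω < N) := by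
      ext i
      simp only [Finset.mem_range, Finset.mem_filter]
      omega
    rw [hfilter, Finset.sum_filter]
    refine Finset.sum_congr rfl fun i _ => ?_
    by_cases h : i + M ω < N
    · have : ω ∈ A i := h
      simp [h, Set.indicator_of_mem this]
    · have : ω ∉ A i := h
      simp [h, Set.indicator_of_notMem this]
  -- value of each integral
  have hind : ∀ i < N, ∫ ω, (A i).indicator (Y i) ω ∂μ
      = (∫ ω, Y i ω ∂μ) * (μ (A i)).toReal := by
    intro i hi
    have heq : (fun ω => (A i).indicator (Y i) ω)
        = Y i * (A i).indicator (fun _ => (1:ℝ)) := by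
      funext ω
      by_cases h : ω ∈ A i
      · simp [Set.indicator_of_mem h]
      · simp [Set.indicator_of_notMem h]
    have hindep' : IndepFun (Y i) ((A i).indicator (fun _ => (1:ℝ))) μ := by
      rw [hφ i]
      exact (hindep i hi).comp measurable_id measurable_from_nat
    rw [heq, hindep'.integral_mul_eq_mul_integral (hYmeas i hi).aestronglyMeasurable
      ((measurable_const.indicator (hAmeas i)).aestronglyMeasurable)]
    congr 1
    exact integral_indicator_one (hAmeas i)
  -- lower bound on each integral
  have hlow : ∀ i ∈ Finset.range N, c * (μ (A i)).toReal ≤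
      ∫ ω, (A i).indicator (Y i) ω ∂μ := by
    intro i hi
    rw [Finset.mem_range] at hi
    rw [hind i hi]
    exact mul_le_mul_of_nonneg_right (hEY i hi) ENNReal.toReal_nonneg
  -- sum of probabilities equals expectation of N - M
  have hMint : Integrable (fun ω => (M ω : ℝ)) μ := by
    refine Integrable.mono' (integrable_const (N : ℝ))
      ((measurable_from_nat.comp hM).aestronglyMeasurable) ?_
    · filter_upwards with ω
      rw [Real.norm_eq_abs, abs_of_nonneg (by positivity)]
      exact_mod_cast hMN ω
  have hsum : ∑ i ∈ Finset.range N, (μ (A i)).toReal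
      = (N : ℝ) - ∫ ω, (M ω : ℝ) ∂μ := by
    have h1 : ∀ i, (μ (A i)).toReal = ∫ ω, (A i).indicator (fun _ => (1:ℝ)) ω ∂μ := by
      intro i
      exact (integral_indicator_one (hAmeas i)).symm
    simp_rw [h1]
    rw [← integral_finset_sum]
    · have h2 : ∀ ω, (∑ i ∈ Finset.range N, (A i).indicator (fun _ => (1:ℝ)) ω)
          = (N : ℝ) - (M ω : ℝ) := by
        intro ω
        have : ∀ i, (A i).indicator (fun _ => (1:ℝ)) ω
            = if i + M ω < N then (1:ℝ) else 0 := by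
          intro i
          by_cases h : ω ∈ A i
          · have h' : i + M ω < N := h
            simp [Set.indicator_of_mem h, h']
          · have h' : ¬ (i + M ω < N) := h
            simp [Set.indicator_of_notMem h, h']
        simp_rw [this]
        rw [← Finset.sum_filter]
        have hfilter : (Finset.range N).filter (fun i => i + M ω < N)
            = Finset.range (N - M ω) := by
          ext i
          simp only [Finset.mem_range, Finset.mem_filter]
          omega
        rw [hfilter]
        simp only [Finset.sum_const, Finset.card_range, nsmul_eq_mul, mul_one]
        rw [Nat.cast_sub (hMN ω)]
      simp_rw [h2]
      rw [integral_sub (integrable_const _) hMint, integral_const]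
      simp
    · intro i _
      exact (integrable_const 1).indicator (hAmeas i)
  -- put everything together
  calc c * ((N : ℝ) - ∫ ω, (M ω : ℝ) ∂μ)
      = ∑ i ∈ Finset.range N, c * (μ (A i)).toReal := by
        rw [← Finset.mul_sum, hsum]
    _ ≤ ∑ i ∈ Finset.range N, ∫ ω, (A i).indicator (Y i) ω ∂μ :=
        Finset.sum_le_sum hlow
    _ = ∫ ω, (∑ i ∈ Finset.range N, (A i).indicator (Y i) ω) ∂μ := by
        rw [← integral_finset_sum]
        intro i hi
        rw [Finset.mem_range] at hi
        exact (hYint i hi).indicator (hAmeas i)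
    _ = ∫ ω, (∑ i ∈ Finset.range (N - M ω), Y i ω) ∂μ := by
        refine integral_congr_ae ?_
        filter_upwards with ω
        rw [hpt ω]
end

section
/- For every real number α with 0.7375 ≤ α < 1, it holds that 1 < 1 − exp(−α) + (α² / (1 − α)) · (1 − exp(−(1 − α))). -/
set_option maxHeartbeats 1000000

theorem wss_inequality {α : ℝ} (h1 : 0.7375 ≤ α) (h2 : α < 1) :
    1 < 1 - Real.exp (-α) + α ^ 2 / (1 - α) * (1 - Real.exp (-(1 - α))) := by
  set t : ℝ := 1 - α with ht
  have ht0 : 0 < t := by simp only [ht]; linarith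
  have ht1 : t ≤ 0.2625 := by simp only [ht]; norm_num; linarith
  have hu : (0:ℝ) ≤ 0.2625 - t := by linarith
  -- upper bound for exp t
  have hup : Real.exp t ≤ 1 + t + t ^ 2 / 2 + t ^ 3 / 6 + 5 / 96 * t ^ 4 := by
    have h := Real.exp_bound' ht0.le (by linarith : t ≤ 1) (n := 4) (by norm_num)
    simp [Finset.sum_range_succ, Nat.factorial] at h
    nlinarith [h]
  -- upper bound for exp (-t)
  have hnegup : Real.exp (-t) ≤ 1 - t + t ^ 2 / 2 - t ^ 3 / 6 + t ^ 4 / 24 := by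
    have hs : 1 + t + t ^ 2 / 2 + t ^ 3 / 6 + t ^ 4 / 24 ≤ Real.exp t := by
      have h := Real.sum_le_exp_of_nonneg ht0.le 5
      simp [Finset.sum_range_succ, Nat.factorial] at h
      nlinarith [h]
    have hpos := Real.exp_pos t
    have hpolypos : (0:ℝ) < 1 - t + t ^ 2 / 2 - t ^ 3 / 6 + t ^ 4 / 24 := by
      nlinarith [sq_nonneg t, sq_nonneg (t^2), mul_nonneg (mul_nonneg ht0.le ht0.le) ht0.le]
    have hprod : (1 - t + t ^ 2 / 2 - t ^ 3 / 6 + t ^ 4 / 24) *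
        (1 + t + t ^ 2 / 2 + t ^ 3 / 6 + t ^ 4 / 24) = 1 + t ^ 6 / 72 + t ^ 8 / 576 := by
      ring
    have key : 1 ≤ (1 - t + t ^ 2 / 2 - t ^ 3 / 6 + t ^ 4 / 24) * Real.exp t := by
      have h1' := mul_le_mul_of_nonneg_left hs hpolypos.le
      rw [hprod] at h1'
      nlinarith [pow_nonneg ht0.le 6, pow_nonneg ht0.le 8]
    rw [Real.exp_neg, inv_le_iff_one_le_mul₀ hpos]
    linarith [key]
  have hE : (2.7182818283 : ℝ) < Real.exp 1 := Real.exp_one_gt_d9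
  have hEpos : (0:ℝ) < Real.exp 1 := Real.exp_pos 1
  have hexpa : Real.exp (-α) = Real.exp t / Real.exp 1 := by
    rw [← Real.exp_sub]; congr 1; rw [ht]; ring
  -- positivity of the quartic factor
  have hq : (0:ℝ) ≤ t - t ^ 2 / 2 + t ^ 3 / 6 - t ^ 4 / 24 := by
    nlinarith [mul_pos ht0 (show (0:ℝ) < 1 - t / 2 by linarith),
      mul_nonneg (mul_nonneg (mul_nonneg ht0.le ht0.le) ht0.le)
        (show (0:ℝ) ≤ 1 / 6 - t / 24 by linarith)]
  have hgoal : Real.exp (-α) < α ^ 2 / t * (1 - Real.exp (-t)) := by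
    rw [div_mul_eq_mul_div, lt_div_iff₀ ht0, hexpa, div_mul_eq_mul_div, div_lt_iff₀ hEpos]
    have hα : α = 1 - t := by rw [ht]; ring
    have hlow : (1 - t) ^ 2 * (t - t ^ 2 / 2 + t ^ 3 / 6 - t ^ 4 / 24)
        ≤ α ^ 2 * (1 - Real.exp (-t)) := by
      rw [hα]
      nlinarith [hnegup, sq_nonneg (1 - t)]
    have hfin : Real.exp t * t <
        (1 - t) ^ 2 * (t - t ^ 2 / 2 + t ^ 3 / 6 - t ^ 4 / 24) * (2.7182818283 : ℝ) := by
      have e1 : Real.exp t * t ≤ (1 + t + t ^ 2 / 2 + t ^ 3 / 6 + 5 / 96 * t ^ 4) * t :=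
        mul_le_mul_of_nonneg_right hup ht0.le
      have c0 := ht0
      have c1 := mul_nonneg ht0.le hu
      have c2 := mul_nonneg ht0.le (mul_nonneg hu hu)
      have c3 := mul_nonneg ht0.le (mul_nonneg hu (mul_nonneg hu hu))
      have c4 := mul_nonneg ht0.le (mul_nonneg (mul_nonneg hu hu) (mul_nonneg hu hu))
      have c5 := mul_nonneg ht0.le (mul_nonneg hu (mul_nonneg (mul_nonneg hu hu) (mul_nonneg hu hu)))
      linarith [e1, c0, c1, c2, c3, c4, c5]
    calc Real.exp t * t
        < (1 - t) ^ 2 * (t - t ^ 2 / 2 + t ^ 3 / 6 - t ^ 4 / 24) * (2.7182818283 : ℝ) := hfin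
      _ ≤ (1 - t) ^ 2 * (t - t ^ 2 / 2 + t ^ 3 / 6 - t ^ 4 / 24) * Real.exp 1 :=
          mul_le_mul_of_nonneg_left hE.le (mul_nonneg (sq_nonneg _) hq)
      _ ≤ α ^ 2 * (1 - Real.exp (-t)) * Real.exp 1 :=
          mul_le_mul_of_nonneg_right hlow hEpos.le
  linarith [hgoal]
end

section
/- For every real number α with 0.7375 ≤ α < 1, it holds that (−2 + exp(α − 1) · (2 + α·(4 − 5α + α³))) / (α − 1)³ ≥ 0. -/
theorem v_nonneg {α : ℝ} (h1 : 0.7375 ≤ α) (h2 : α < 1) :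
    0 ≤ (-2 + Real.exp (α - 1) * (2 + α * (4 - 5 * α + α ^ 3))) / (α - 1) ^ 3 := by
  have hx : (0:ℝ) ≤ 1 - α := by linarith
  have hD : 1 + (1 - α) + (1 - α) ^ 2 / 2 ≤ Real.exp (1 - α) :=
    Real.quadratic_le_exp_of_nonneg hx
  have hepos : 0 < Real.exp (α - 1) := Real.exp_pos _
  have hED : Real.exp (α - 1) * (1 + (1 - α) + (1 - α) ^ 2 / 2) ≤ 1 := by
    have := mul_le_mul_of_nonneg_left hD hepos.le
    rwa [← Real.exp_add, show α - 1 + (1 - α) = 0 by ring, Real.exp_zero] at this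
  have hPD : 2 + α * (4 - 5 * α + α ^ 3) ≤ 2 * (1 + (1 - α) + (1 - α) ^ 2 / 2) := by
    nlinarith [sq_nonneg (1 - α), mul_pos (mul_pos (sub_pos.2 h2) (sub_pos.2 h2)) (sub_pos.2 h2)]
  have hnum : -2 + Real.exp (α - 1) * (2 + α * (4 - 5 * α + α ^ 3)) ≤ 0 := by
    nlinarith [mul_le_mul_of_nonneg_left hPD hepos.le]
  have hden : (α - 1) ^ 3 < 0 := by
    have : α - 1 < 0 := by linarith
    exact Odd.pow_neg (by decide) this
  exact div_nonneg_of_nonpos hnum hden.le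
end
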